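/- For any commutative ring R with identity, the Anderson ring R[X]_A is a faithfully flat R-module (via the canonical ring homomorphism R → R[X]_A). -/

import Mathlib

open Polynomial

/-- The multiplicative set `A = {f ∈ R[X] : f(0) = 1}` of polynomials
with constant term `1`. -/
def andersonSubmonoid (R : Type*) [CommRing R] : Submonoid (Polynomial R) where
  carrier := {f | f.coeff 0 = 1}
  one_mem' := by simp
  mul_mem' := by
    intro a b ha hb
    simp only [Set.mem_setOf_eq, Polynomial.mul_coeff_zero] at *
    rw [ha, hb, mul_one]

/-- The Anderson ring `R[X]_A`, the localization of `R[X]` at `A`. -/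
abbrev AndersonRing (R : Type*) [CommRing R] := Localization (andersonSubmonoid R)

/-- The canonical ring homomorphism `R → R[X]_A`. -/
noncomputable def andersonMap (R : Type*) [CommRing R] : R →+* AndersonRing R :=
  (algebraMap (Polynomial R) (AndersonRing R)).comp Polynomial.C

/-- `R[X]` is a free `R`-module. -/
noncomputable instance polyFree (R : Type*) [CommRing R] : Module.Free R (Polynomial R) :=
  Module.Free.of_basis (Polynomial.basisMonomials R)

/-- The retraction `R[X]_A → R` induced by evaluation at `0` (the constant
coefficient), well-defined since every element of `A` has constant term `1`. -/
noncomputable def andersonRetract (R : Type*) [CommRing R] : AndersonRing R →+* R :=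
  IsLocalization.lift (M := andersonSubmonoid R) (g := Polynomial.constantCoeff)
    (fun y => by
      have : Polynomial.constantCoeff (y : Polynomial R) = 1 := y.2
      rw [this]; exact isUnit_one)

lemma andersonRetract_algebraMap (R : Type*) [CommRing R] (r : R) :
    andersonRetract R (algebraMap R (AndersonRing R) r) = r := by
  rw [IsScalarTower.algebraMap_apply R (Polynomial R) (AndersonRing R)]
  simp [andersonRetract, IsLocalization.lift_eq]

/-- The retraction as an `R`-linear map. -/
noncomputable def andersonRetractₗ (R : Type*) [CommRing R] :
    AndersonRing R →ₗ[R] R where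
  toFun := andersonRetract R
  map_add' := map_add _
  map_smul' r x := by
    simp only [RingHom.id_apply]
    rw [Algebra.smul_def, map_mul, andersonRetract_algebraMap, smul_eq_mul]

/-- The Anderson ring `R[X]_A` is a faithfully flat `R`-module. -/
theorem anderson_faithfullyFlat (R : Type*) [CommRing R] :
    Module.FaithfullyFlat R (AndersonRing R) := by
  have : Module.Flat R (AndersonRing R) := Module.Flat.trans R (Polynomial R) _
  refine ⟨fun m hm h => ?_⟩
  apply hm.ne_top
  rw [Ideal.eq_top_iff_one]
  have h1 : (1 : R) ∈ (⊤ : Submodule R (AndersonRing R)).map (andersonRetractₗ R) :=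
    ⟨1, trivial, map_one (andersonRetract R)⟩
  rw [← h, Submodule.map_smul'' m ⊤ (andersonRetractₗ R)] at h1
  have h2 := smul_mono_right m
    (le_top (a := (⊤ : Submodule R (AndersonRing R)).map (andersonRetractₗ R)))
  simpa using h2 h1
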